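/- arXiv:0708.2542 — 4 statements merged into one kernel-verified Lean document; each statement's English description precedes it below -/
import Mathlib

section
/- Let U ⊆ ℝⁿ be an open convex cone and f : U → ℝ continuously differentiable and positively homogeneous of degree 1. Then f is sub-additive on U if and only if for all u, u+v ∈ U we have Σᵢ uᵢ · ∂f/∂uᵢ(u+v) ≤ f(u). -/
open scoped BigOperators

/-- Characterization of sub-additivity via the gradient, for continuously differentiable
positively homogeneous (degree 1) functions on an open convex cone. -/
theorem subadditive_iff_gradient_ineq {n : ℕ} (U : Set (Fin n → ℝ)) (hU : IsOpen U)
    (hconv : Convex ℝ U) (hcone : ∀ (h : ℝ), 0 < h → ∀ u ∈ U, h • u ∈ U)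
    (f : (Fin n → ℝ) → ℝ) (hf : ContDiffOn ℝ 1 f U)
    (hhom : ∀ (h : ℝ), 0 < h → ∀ u ∈ U, f (h • u) = h * f u) :
    (∀ u v : Fin n → ℝ, u ∈ U → v ∈ U → u + v ∈ U → f (u + v) ≤ f u + f v) ↔
      (∀ u v : Fin n → ℝ, u ∈ U → u + v ∈ U →
        ∑ i, u i * fderiv ℝ f (u + v) (Pi.single i 1) ≤ f u) := by
  -- U is closed under addition
  have hadd : ∀ a ∈ U, ∀ b ∈ U, a + b ∈ U := by
    intro a ha b hb
    have h2 := hcone 2 (by norm_num) _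
      (hconv ha hb (by norm_num) (by norm_num) (by norm_num : (1/2:ℝ) + 1/2 = 1))
    have : (2:ℝ) • ((1/2:ℝ) • a + (1/2:ℝ) • b) = a + b := by
      rw [smul_add, smul_smul, smul_smul]; norm_num
    rwa [this] at h2
  have hdiff : ∀ w ∈ U, DifferentiableAt ℝ f w := fun w hw =>
    (hf.differentiableOn one_ne_zero).differentiableAt (hU.mem_nhds hw)
  have hlin : ∀ (w u : Fin n → ℝ),
      fderiv ℝ f w u = ∑ i, u i * fderiv ℝ f w (Pi.single i 1) := by
    intro w u
    have hu : u = ∑ i, u i • (Pi.single i 1 : Fin n → ℝ) := by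
      have h1 : ∀ i, u i • (Pi.single i 1 : Fin n → ℝ) = Pi.single i (u i) := by
        intro i
        funext j
        by_cases h : j = i <;> simp [Pi.single_apply, h]
      simp_rw [h1]
      exact (Finset.univ_sum_single u).symm
    conv_lhs => rw [hu]
    rw [map_sum]
    simp [smul_eq_mul]
  constructor
  · -- subadditivity ⇒ gradient inequality
    intro hsub u v hu huv
    rw [← hlin]
    set w := u + v with hw
    have hder : HasDerivAt (fun t : ℝ => f (w + t • u)) (fderiv ℝ f w u) 0 := by
      have h1 : HasDerivAt (fun t : ℝ => w + t • u) u 0 := by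
        simpa using ((hasDerivAt_id (0:ℝ)).smul_const u).const_add w
      have hw0 : HasFDerivAt f (fderiv ℝ f w) (w + (0:ℝ) • u) := by
        simpa using (hdiff w huv).hasFDerivAt
      exact hw0.comp_hasDerivAt 0 h1
    have htend := (hder.hasDerivWithinAt (s := Set.Ioi (0:ℝ)))
    rw [hasDerivWithinAt_iff_tendsto_slope] at htend
    rw [Set.diff_singleton_eq_self (by simp : (0:ℝ) ∉ Set.Ioi 0)] at htend
    refine le_of_tendsto htend ?_
    have hsub' : ∀ t : ℝ, 0 < t → slope (fun t : ℝ => f (w + t • u)) 0 t ≤ f u := by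
      intro t ht
      have htuU : t • u ∈ U := hcone t ht u hu
      have hfle : f (w + t • u) ≤ f w + t * f u := by
        have := hsub w (t • u) huv htuU (hadd w huv _ htuU)
        rwa [hhom t ht u hu] at this
      have : slope (fun t : ℝ => f (w + t • u)) 0 t
          = (f (w + t • u) - f w) / t := by
        simp [slope, div_eq_inv_mul]
      rw [this]
      rw [div_le_iff₀ ht]
      nlinarith
    filter_upwards [self_mem_nhdsWithin] with t ht
    exact hsub' t ht
  · -- gradient inequality ⇒ subadditivity
    intro hgrad u v hu hv huv
    set φ : ℝ → ℝ := fun s => f (u + s • v) - s * f v with hφ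
    have hmem : ∀ t ∈ Set.Icc (0:ℝ) 1, u + t • v ∈ U := by
      intro t ht
      have h := hconv hu huv (sub_nonneg.2 ht.2) ht.1 (by ring)
      have : (1 - t) • u + t • (u + v) = u + t • v := by
        rw [smul_add, sub_smul, one_smul]; abel
      rwa [this] at h
    have hderφ : ∀ t ∈ Set.Icc (0:ℝ) 1,
        HasDerivAt φ (fderiv ℝ f (u + t • v) v - f v) t := by
      intro t ht
      have h1 : HasDerivAt (fun s : ℝ => u + s • v) v t := by
        simpa using ((hasDerivAt_id t).smul_const v).const_add u
      have hw0 : HasFDerivAt f (fderiv ℝ f (u + t • v)) (u + t • v) :=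
        (hdiff _ (hmem t ht)).hasFDerivAt
      have h2 := hw0.comp_hasDerivAt t h1
      have h3 : HasDerivAt (fun s : ℝ => s * f v) (f v) t := by
        simpa using (hasDerivAt_id t).mul_const (f v)
      exact h2.sub h3
    have hderiv_nonpos : ∀ t ∈ Set.Icc (0:ℝ) 1, fderiv ℝ f (u + t • v) v - f v ≤ 0 := by
      intro t ht
      have hb : v + (u + t • v - v) = u + t • v := by abel
      have := hgrad v (u + t • v - v) hv (by rw [hb]; exact hmem t ht)
      rw [hb] at this
      rw [← hlin] at this
      linarith
    have hanti : AntitoneOn φ (Set.Icc 0 1) := by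
      apply antitoneOn_of_deriv_nonpos (convex_Icc 0 1)
      · exact fun t ht => (hderφ t ht).continuousAt.continuousWithinAt
      · intro t ht
        rw [interior_Icc] at ht
        exact ((hderφ t (Set.mem_Icc_of_Ioo ht)).differentiableAt).differentiableWithinAt
      · intro t ht
        rw [interior_Icc] at ht
        rw [(hderφ t (Set.mem_Icc_of_Ioo ht)).deriv]
        exact hderiv_nonpos t (Set.mem_Icc_of_Ioo ht)
    have h01 := hanti (Set.left_mem_Icc.2 zero_le_one) (Set.right_mem_Icc.2 zero_le_one)
      zero_le_one
    simp only [hφ, zero_smul, add_zero, zero_mul, sub_zero, one_smul, one_mul] at h01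
    linarith
end

section
/- Let f : ℝⁿ → ℝ (or on an open cone containing the positive orthant) be continuously differentiable, positively homogeneous of degree 1, and sub-additive. Define the Euler contribution of coordinate i at the point 𝟙 = (1,…,1) as ∂f/∂uᵢ(𝟙), and the stand-alone risk of coordinate i as f(eᵢ) where eᵢ is the i-th standard basis vector. Then ∂f/∂uᵢ(𝟙) ≤ f(eᵢ) for each i. -/
/-- Euler contributions never exceed stand-alone risks: if `f` is continuously
differentiable, positively homogeneous of degree 1 and sub-additive, then
`∂f/∂uᵢ(𝟙) ≤ f(eᵢ)` for every `i`. -/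
theorem euler_contribution_le_standalone {n : ℕ} (f : (Fin n → ℝ) → ℝ)
    (hf : ContDiff ℝ 1 f)
    (hhom : ∀ (h : ℝ), 0 < h → ∀ u, f (h • u) = h * f u)
    (hsub : ∀ u v : Fin n → ℝ, f (u + v) ≤ f u + f v) :
    ∀ i : Fin n, fderiv ℝ f (fun _ => 1) (Pi.single i 1) ≤ f (Pi.single i 1) := by
  intro i
  set e : Fin n → ℝ := Pi.single i 1 with he
  set one : Fin n → ℝ := fun _ => 1 with hone
  have hd : HasFDerivAt f (fderiv ℝ f one) one :=
    ((hf.differentiable one_ne_zero) one).hasFDerivAt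
  have hinner : HasDerivAt (fun t : ℝ => one + t • e) e 0 := by
    have h1 : HasDerivAt (fun t : ℝ => t • e) ((1 : ℝ) • e) 0 :=
      (hasDerivAt_id 0).smul_const e
    simpa using h1.const_add one
  have hg : HasDerivAt (fun t : ℝ => f (one + t • e)) (fderiv ℝ f one e) 0 := by
    have hd' : HasFDerivAt f (fderiv ℝ f one) (one + (0:ℝ) • e) := by simpa using hd
    exact hd'.comp_hasDerivAt 0 hinner
  have htend : Filter.Tendsto (slope (fun t : ℝ => f (one + t • e)) 0)
      (nhdsWithin 0 (Set.Ioi 0)) (nhds (fderiv ℝ f one e)) := by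
    have := hasDerivAt_iff_tendsto_slope.mp hg
    exact this.mono_left (nhdsWithin_mono _ (fun t ht => ne_of_gt ht))
  refine le_of_tendsto htend ?_
  filter_upwards [self_mem_nhdsWithin] with t (ht : 0 < t)
  have hb : f (one + t • e) ≤ f one + t * f e := by
    calc f (one + t • e) ≤ f one + f (t • e) := hsub one (t • e)
      _ = f one + t * f e := by rw [hhom t ht]
  have : slope (fun t : ℝ => f (one + t • e)) 0 t
      = (f (one + t • e) - f (one + (0:ℝ) • e)) / t := by
    simp [slope_def_field, div_eq_inv_mul, mul_comm]
  rw [this]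
  rw [div_le_iff₀ ht]
  simp only [zero_smul, add_zero]
  nlinarith [hb]
end

section
/- Let f : ℝⁿ → ℝ be continuously differentiable (away from 0), positively homogeneous of degree 1 and sub-additive. Define the marginal contribution of coordinate i at 𝟙 = (1,…,1) as mᵢ = f(𝟙) − f(𝟙 − eᵢ), and the Euler contribution as cᵢ = ∂f/∂uᵢ(𝟙). Then mᵢ ≤ cᵢ for every i, and consequently Σᵢ mᵢ ≤ Σᵢ (f(𝟙) − f(𝟙 − eᵢ)) ≤ f(𝟙). -/
open scoped BigOperators
open Filter

/-- Marginal risk contributions are below the Euler contributions, and their sum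
underestimates total risk. Here `f` is continuously differentiable away from `0`,
positively homogeneous of degree 1, and sub-additive. -/
theorem marginal_le_euler_contribution {n : ℕ} (hn : 0 < n) (f : (Fin n → ℝ) → ℝ)
    (hf : ContDiffOn ℝ 1 f {x | x ≠ 0})
    (hhom : ∀ (h : ℝ), 0 < h → ∀ u, f (h • u) = h * f u)
    (hsub : ∀ u v : Fin n → ℝ, f (u + v) ≤ f u + f v) :
    (∀ i : Fin n,
        f (fun _ => 1) - f ((fun _ => 1) - Pi.single i 1)
          ≤ fderiv ℝ f (fun _ => 1) (Pi.single i 1)) ∧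
      ∑ i, (f (fun _ => 1) - f ((fun _ => 1) - Pi.single i 1)) ≤ f (fun _ => 1) := by
  have f0 : f 0 = 0 := by
    have h2 := hhom 2 two_pos 0
    simp at h2; linarith
  set one : Fin n → ℝ := (fun _ => 1) with hone
  have hone0 : one ≠ 0 := by
    intro h
    have := congrFun h ⟨0, hn⟩
    simp [hone] at this
  have hopen : IsOpen {x : Fin n → ℝ | x ≠ 0} := isOpen_ne
  have hdiff : HasFDerivAt f (fderiv ℝ f one) one :=
    ((hf.contDiffAt (hopen.mem_nhds hone0)).differentiableAt one_ne_zero).hasFDerivAt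
  have hcc : ∀ a b : ℝ, 0 < a → 0 < b → ∀ x y, f (a • x + b • y) ≤ a * f x + b * f y := by
    intro a b ha hb x y
    calc f (a • x + b • y) ≤ f (a • x) + f (b • y) := hsub _ _
      _ = a * f x + b * f y := by rw [hhom a ha, hhom b hb]
  -- key derivative bound
  have key : ∀ v : Fin n → ℝ, fderiv ℝ f one v ≤ f (one + v) - f one := by
    intro v
    have hg : HasDerivAt (fun t : ℝ => f (one + t • v)) (fderiv ℝ f one v) 0 := by
      have hg0 : HasDerivAt (fun t : ℝ => one + t • v) v 0 := by
        simpa using ((hasDerivAt_id (0:ℝ)).smul_const v).const_add one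
      have h1 : HasFDerivAt f (fderiv ℝ f one) ((fun t : ℝ => one + t • v) 0) := by
        simpa using hdiff
      exact h1.comp_hasDerivAt (x := (0:ℝ)) hg0
    have htend : Tendsto (slope (fun t : ℝ => f (one + t • v)) 0) (nhdsWithin 0 (Set.Ioi 0))
        (nhds (fderiv ℝ f one v)) :=
      (hasDerivAt_iff_tendsto_slope.mp hg).mono_left
        (nhdsWithin_mono 0 (by intro t ht; exact ne_of_gt ht))
    refine le_of_tendsto htend ?_
    filter_upwards [Ioo_mem_nhdsGT_of_mem (Set.mem_Ico.mpr ⟨le_rfl, zero_lt_one⟩)] with t ht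
    obtain ⟨ht0, ht1⟩ := ht
    have hdecomp : one + t • v = (1 - t) • one + t • (one + v) := by
        simp [smul_add, sub_smul, one_smul]; abel
    have hb := hcc (1 - t) t (by linarith) ht0 one (one + v)
    rw [← hdecomp] at hb
    have hs : slope (fun t : ℝ => f (one + t • v)) 0 t = (f (one + t • v) - f one) / t := by
      simp [slope_def_field]
    rw [hs, div_le_iff₀ ht0]
    nlinarith
  constructor
  · intro i
    have hk := key (-Pi.single i 1)
    have hmap : fderiv ℝ f one (-Pi.single i 1) = -(fderiv ℝ f one (Pi.single i 1)) :=
      map_neg _ _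
    rw [hmap] at hk
    have heq : one + -Pi.single i 1 = one - Pi.single i 1 := (sub_eq_add_neg _ _).symm
    rw [heq] at hk
    linarith
  · -- finite subadditivity
    have hsum : ∀ (s : Finset (Fin n)) (g : Fin n → (Fin n → ℝ)),
        f (∑ i ∈ s, g i) ≤ ∑ i ∈ s, f (g i) := by
      intro s g
      induction s using Finset.cons_induction with
      | empty => simp [f0]
      | cons a s ha ih =>
        rw [Finset.sum_cons, Finset.sum_cons]
        exact (hsub _ _).trans (by linarith)
    have hsingles : ∑ i : Fin n, (Pi.single i 1 : Fin n → ℝ) = one := by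
      have := Finset.univ_sum_single (one : Fin n → ℝ)
      simpa [hone] using this
    have hdecomp : ∑ i : Fin n, (one - Pi.single i 1) = ((n : ℝ) - 1) • one := by
      rw [Finset.sum_sub_distrib, hsingles, Finset.sum_const, Finset.card_univ,
        Fintype.card_fin]
      funext j
      simp [hone, sub_smul]
    have hval : f (((n : ℝ) - 1) • one) = ((n : ℝ) - 1) * f one := by
      rcases eq_or_lt_of_le (show (0:ℝ) ≤ (n:ℝ) - 1 by
        have : (1:ℝ) ≤ n := by exact_mod_cast hn
        linarith) with h | h
      · rw [← h, zero_smul, f0, zero_mul]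
      · exact hhom _ h one
    have hb := hsum Finset.univ (fun i => one - Pi.single i 1)
    rw [hdecomp, hval] at hb
    rw [Finset.sum_sub_distrib, Finset.sum_const, Finset.card_univ, Fintype.card_fin,
      nsmul_eq_mul]
    linarith
end

section
/- Let X₁,…,Xₙ be integrable real random variables, X = Σᵢ Xᵢ, and suppose X has a continuous distribution at the quantile level (P[X ≤ −VaR_α(X)] = 1 − α with P[X = −VaR_α(X)] = 0), where VaR_α(X) = q_α(−X) and q_γ(Y) = inf{y : P[Y ≤ y] ≥ γ}. Then the Expected Shortfall ES_α(X) = (1/(1−α))·∫_α^1 VaR_u(X) du satisfies ES_α(X) = −E[X | X ≤ −VaR_α(X)], and the quantities cᵢ = −(1−α)^{-1}·E[Xᵢ·𝟙{X ≤ −VaR_α(X)}] satisfy Σᵢ cᵢ = ES_α(X). -/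
open MeasureTheory
open scoped BigOperators
open Set Filter
open scoped ENNReal Topology

/-- The lower `γ`-quantile `q_γ(Y) = inf{y : P[Y ≤ y] ≥ γ}`. -/
noncomputable def lowerQuantile {Ω : Type*} [MeasurableSpace Ω] (μ : Measure Ω)
    (Y : Ω → ℝ) (γ : ℝ) : ℝ :=
  sInf {y | ENNReal.ofReal γ ≤ μ {ω | Y ω ≤ y}}

/-- Value-at-Risk at level `α`: `VaR_α(X) = q_α(−X)`. -/
noncomputable def valueAtRisk {Ω : Type*} [MeasurableSpace Ω] (μ : Measure Ω)
    (X : Ω → ℝ) (α : ℝ) : ℝ :=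
  lowerQuantile μ (fun ω => -X ω) α

/-- Expected Shortfall at level `α`. -/
noncomputable def expectedShortfall {Ω : Type*} [MeasurableSpace Ω] (μ : Measure Ω)
    (X : Ω → ℝ) (α : ℝ) : ℝ :=
  (1 - α)⁻¹ * ∫ u in α..1, valueAtRisk μ X u

lemma quantile_tail_repr {Ω : Type*} [MeasurableSpace Ω] (μ : Measure Ω)
    [IsProbabilityMeasure μ] (Y : Ω → ℝ) (hY : Measurable Y) (hYint : Integrable Y μ)
    (α : ℝ) (hα : α ∈ Set.Ioo (0:ℝ) 1) {v : ℝ} (hv : v = lowerQuantile μ Y α)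
    (hcont : μ {ω | Y ω = v} = 0)
    (hprob : (μ {ω | v ≤ Y ω}).toReal = 1 - α) :
    (∫ u in α..1, lowerQuantile μ Y u = ∫ ω in {ω | v ≤ Y ω}, Y ω ∂μ)
    ∧ IntegrableOn (fun u => lowerQuantile μ Y u) (Set.Ioo α 1) := by
  have hα0 := hα.1
  have hα1 := hα.2
  set F : ℝ → ℝ≥0∞ := fun y => μ {ω | Y ω ≤ y} with hF
  have hFfin : ∀ y, F y ≠ ⊤ := fun y => measure_ne_top μ _
  have hFle1 : ∀ y, F y ≤ 1 := fun y => prob_le_one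
  have hFmono : Monotone F := fun y₁ y₂ h =>
    measure_mono (fun ω (hω : Y ω ≤ y₁) => le_trans hω h)
  have hmsets : ∀ y, MeasurableSet {ω | Y ω ≤ y} :=
    fun y => measurableSet_le hY measurable_const
  have hT : MeasurableSet {ω | v ≤ Y ω} := measurableSet_le measurable_const hY
  -- F v = ofReal α
  have hcompl : {ω | v ≤ Y ω}ᶜ = {ω | Y ω < v} := by ext ω; simp [not_le]
  have hFv : F v = ENNReal.ofReal α := by
    have h1 : μ {ω | Y ω < v} = 1 - μ {ω | v ≤ Y ω} := by
      rw [← hcompl]; exact prob_compl_eq_one_sub hT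
    have hsplit : {ω | Y ω ≤ v} ⊆ {ω | Y ω = v} ∪ {ω | Y ω < v} := by
      intro ω hω
      rcases eq_or_lt_of_le (show Y ω ≤ v from hω) with h | h
      · exact Or.inl h
      · exact Or.inr h
    have h2 : F v = μ {ω | Y ω < v} := by
      refine le_antisymm ?_ (measure_mono fun ω (hω : Y ω < v) => hω.le)
      calc F v ≤ μ ({ω | Y ω = v} ∪ {ω | Y ω < v}) := measure_mono hsplit
        _ ≤ μ {ω | Y ω = v} + μ {ω | Y ω < v} := measure_union_le _ _
        _ = μ {ω | Y ω < v} := by rw [hcont, zero_add]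
    have h3 : (F v).toReal = α := by
      rw [h2, h1, ENNReal.toReal_sub_of_le prob_le_one ENNReal.one_ne_top, hprob]
      simp
    rw [← h3, ENNReal.ofReal_toReal (hFfin v)]
  -- tail measure
  have htail : ∀ t : ℝ, μ {ω | v + t < Y ω} = 1 - F (v + t) := by
    intro t
    have : {ω | Y ω ≤ v + t}ᶜ = {ω | v + t < Y ω} := by ext ω; simp [not_le]
    rw [← this, prob_compl_eq_one_sub (hmsets _)]
  -- nonemptiness of quantile sets
  have h_ne : ∀ u : ℝ, u < 1 → {y | ENNReal.ofReal u ≤ F y}.Nonempty := by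
    intro u hu
    have h2 : Tendsto (fun n : ℕ => F n) atTop (𝓝 (μ (⋃ n : ℕ, {ω | Y ω ≤ n}))) := by
      exact tendsto_measure_iUnion_atTop
        (fun n m hnm => fun ω (hω : Y ω ≤ n) => le_trans hω (by exact_mod_cast hnm))
    have hU : (⋃ n : ℕ, {ω | Y ω ≤ (n:ℝ)}) = univ := by
      ext ω; simp only [mem_iUnion, mem_univ, iff_true, mem_setOf_eq]
      obtain ⟨n, hn⟩ := exists_nat_gt (Y ω); exact ⟨n, hn.le⟩
    rw [hU, measure_univ] at h2
    have hlt : ENNReal.ofReal u < 1 := ENNReal.ofReal_lt_one.2 hu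
    obtain ⟨n, hn⟩ := (h2.eventually (eventually_ge_nhds hlt)).exists
    exact ⟨n, hn⟩
  -- bdd below
  have h_bdd : ∀ u : ℝ, 0 < u → BddBelow {y | ENNReal.ofReal u ≤ F y} := by
    intro u hu
    have h2 : Tendsto (fun n : ℕ => F (-n)) atTop (𝓝 (μ (⋂ n : ℕ, {ω | Y ω ≤ -(n:ℝ)}))) := by
      exact tendsto_measure_iInter_atTop (fun n => (hmsets _).nullMeasurableSet)
        (fun n m hnm => fun ω (hω : Y ω ≤ -(m:ℝ)) =>
          le_trans hω (by simp; exact_mod_cast hnm))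
        ⟨0, measure_ne_top _ _⟩
    have hI : (⋂ n : ℕ, {ω | Y ω ≤ -(n:ℝ)}) = ∅ := by
      ext ω; simp only [mem_iInter, mem_empty_iff_false, iff_false, not_forall, mem_setOf_eq,
        not_le]
      obtain ⟨n, hn⟩ := exists_nat_gt (-Y ω); exact ⟨n, by linarith⟩
    rw [hI, measure_empty] at h2
    have hpos : (0:ℝ≥0∞) < ENNReal.ofReal u := ENNReal.ofReal_pos.2 hu
    obtain ⟨n, hn⟩ := (h2.eventually (eventually_lt_nhds hpos)).exists
    refine ⟨-n, fun y hy => ?_⟩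
    by_contra hlt
    push_neg at hlt
    exact absurd (le_trans hy (hFmono hlt.le)) (not_le.2 hn)
  -- right continuity style fact
  have h_rc : ∀ (s : ℝ) (c : ℝ≥0∞), F s < c → ∃ s', s < s' ∧ F s' < c := by
    intro s c hc
    have h2 : Tendsto (fun n : ℕ => F (s + (n+1:ℝ)⁻¹)) atTop
        (𝓝 (μ (⋂ n : ℕ, {ω | Y ω ≤ s + ((n:ℝ)+1)⁻¹}))) := by
      exact tendsto_measure_iInter_atTop (fun n => (hmsets _).nullMeasurableSet)
        (fun n m hnm => fun ω (hω : Y ω ≤ s + ((m:ℝ)+1)⁻¹) => le_trans hω (by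
          have hc : (n:ℝ) ≤ (m:ℝ) := Nat.cast_le.2 hnm
          have : ((m:ℝ)+1)⁻¹ ≤ ((n:ℝ)+1)⁻¹ := by
            apply inv_anti₀ (by positivity); linarith
          linarith))
        ⟨0, measure_ne_top _ _⟩
    have hI : (⋂ n : ℕ, {ω | Y ω ≤ s + ((n:ℝ)+1)⁻¹}) = {ω | Y ω ≤ s} := by
      ext ω
      simp only [mem_iInter, mem_setOf_eq]
      constructor
      · intro h
        by_contra hlt
        push_neg at hlt
        obtain ⟨n, hn⟩ := exists_nat_gt (Y ω - s)⁻¹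
        have hpos : 0 < Y ω - s := by linarith
        have h1 : ((n:ℝ)+1)⁻¹ < Y ω - s := by
          have h2 : (Y ω - s)⁻¹ < (n:ℝ)+1 := by linarith
          calc ((n:ℝ)+1)⁻¹ < ((Y ω - s)⁻¹)⁻¹ := by
                exact inv_strictAnti₀ (by positivity) h2
            _ = Y ω - s := inv_inv _
        linarith [h n]
      · intro h n
        have hn0 : (0:ℝ) < ((n:ℝ)+1)⁻¹ := by positivity
        linarith
    rw [hI] at h2
    obtain ⟨n, hn⟩ := (h2.eventually (eventually_lt_nhds hc)).exists
    exact ⟨s + ((n:ℝ)+1)⁻¹, by linarith [show (0:ℝ) < ((n:ℝ)+1)⁻¹ by positivity], hn⟩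
  -- key characterization
  have key_iff : ∀ u : ℝ, 0 < u → u < 1 → ∀ s : ℝ,
      (s < lowerQuantile μ Y u ↔ F s < ENNReal.ofReal u) := by
    intro u hu0 hu1 s
    constructor
    · intro h
      by_contra hle
      push_neg at hle
      exact absurd (csInf_le (h_bdd u hu0) hle) (not_le.2 h)
    · intro h
      obtain ⟨s', hss', hs'⟩ := h_rc s _ h
      have hlb : ∀ y ∈ {y | ENNReal.ofReal u ≤ F y}, s' ≤ y := by
        intro y hy
        by_contra hlt
        push_neg at hlt
        exact absurd (le_trans hy (hFmono hlt.le)) (not_le.2 hs')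
      exact lt_of_lt_of_le hss' (le_csInf (h_ne u hu1) hlb)
  -- q u ≥ v on Ioo α 1
  have hv_le : ∀ u ∈ Set.Ioo α 1, v ≤ lowerQuantile μ Y u := by
    intro u hu
    apply le_csInf (h_ne u hu.2)
    intro y hy
    by_contra hlt
    push_neg at hlt
    have : F y ≤ ENNReal.ofReal α := hFv ▸ hFmono hlt.le
    have : F y < ENNReal.ofReal u :=
      lt_of_le_of_lt this ((ENNReal.ofReal_lt_ofReal_iff (lt_trans hα0 hu.1)).2 hu.1)
    exact absurd hy (not_le.2 this)
  -- monotone on Ioo α 1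
  have hq_mono : MonotoneOn (lowerQuantile μ Y) (Set.Ioo α 1) := by
    intro u₁ hu₁ u₂ hu₂ h
    exact csInf_le_csInf (h_bdd u₁ (lt_trans hα0 hu₁.1)) (h_ne u₂ hu₂.2)
      (fun y hy => le_trans (ENNReal.ofReal_le_ofReal h) hy)
  -- the interval identity
  have hFt : ∀ t : ℝ, 0 < t → α ≤ (F (v+t)).toReal ∧ (F (v+t)).toReal ≤ 1 := by
    intro t ht
    constructor
    · have : ENNReal.ofReal α ≤ F (v+t) := hFv ▸ hFmono (by linarith)
      calc α = (ENNReal.ofReal α).toReal := by rw [ENNReal.toReal_ofReal hα0.le]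
        _ ≤ (F (v+t)).toReal := ENNReal.toReal_mono (hFfin _) this
    · calc (F (v+t)).toReal ≤ (1:ℝ≥0∞).toReal := ENNReal.toReal_mono ENNReal.one_ne_top (hFle1 _)
        _ = 1 := ENNReal.toReal_one
  have h_interval : ∀ t : ℝ, 0 < t →
      Set.Ioo α 1 ∩ {u | t < lowerQuantile μ Y u - v} = Set.Ioo ((F (v+t)).toReal) 1 := by
    intro t ht
    ext u
    simp only [mem_inter_iff, mem_Ioo, mem_setOf_eq]
    constructor
    · rintro ⟨⟨hu1, hu2⟩, hqu⟩
      refine ⟨?_, hu2⟩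
      have : v + t < lowerQuantile μ Y u := by linarith
      have := (key_iff u (lt_trans hα0 hu1) hu2 (v+t)).1 this
      exact ENNReal.toReal_lt_of_lt_ofReal this
    · rintro ⟨h1, h2⟩
      have hu1 : α < u := lt_of_le_of_lt (hFt t ht).1 h1
      have hu0 : 0 < u := lt_trans hα0 hu1
      have : F (v+t) < ENNReal.ofReal u := (ENNReal.lt_ofReal_iff_toReal_lt (hFfin _)).2 h1
      have := (key_iff u hu0 h2 (v+t)).2 this
      exact ⟨⟨hu1, h2⟩, by linarith⟩
  -- layer-cake on both sides
  set g : ℝ → ℝ := fun u => lowerQuantile μ Y u - v with hg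
  have hg_ae : AEMeasurable g (volume.restrict (Set.Ioo α 1)) := by
    exact (aemeasurable_restrict_of_monotoneOn measurableSet_Ioo hq_mono).sub aemeasurable_const
  have hg_nn : 0 ≤ᵐ[volume.restrict (Set.Ioo α 1)] g := by
    rw [EventuallyLE, ae_restrict_iff' measurableSet_Ioo]
    exact Filter.Eventually.of_forall fun u hu => by
      simp only [Pi.zero_apply, hg]; linarith [hv_le u hu]
  set h : Ω → ℝ := fun ω => max (Y ω - v) 0 with hh
  have hh_int : Integrable h μ := (hYint.sub (integrable_const v)).pos_part
  have hh_nn : 0 ≤ᵐ[μ] h := Filter.Eventually.of_forall fun ω => le_max_right _ _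
  have hh_meas : AEMeasurable h μ := ((hY.sub measurable_const).max measurable_const).aemeasurable
  -- the two lintegrals agree
  have hsame : ∀ t : ℝ, t ∈ Set.Ioi (0:ℝ) →
      (volume.restrict (Set.Ioo α 1)) {u | t < g u} = μ {a | t < h a} := by
    intro t ht
    rw [Measure.restrict_apply' measurableSet_Ioo]
    have h1 : {u | t < g u} ∩ Set.Ioo α 1 = Set.Ioo ((F (v+t)).toReal) 1 := by
      rw [← h_interval t ht, inter_comm]
    rw [h1, Real.volume_Ioo]
    have h2 : {a | t < h a} = {ω | v + t < Y ω} := by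
      ext ω; simp only [mem_setOf_eq, hh, lt_max_iff]
      have ht' : (0:ℝ) < t := ht
      constructor
      · rintro (h | h)
        · linarith
        · linarith
      · intro h; left; linarith
    rw [h2, htail t]
    have h3 : (1 - F (v+t)).toReal = 1 - (F (v+t)).toReal := by
      rw [ENNReal.toReal_sub_of_le (hFle1 _) ENNReal.one_ne_top, ENNReal.toReal_one]
    rw [← h3, ENNReal.ofReal_toReal (ne_top_of_le_ne_top ENNReal.one_ne_top tsub_le_self)]
  have hlayer_g : ∫⁻ u in Set.Ioo α 1, ENNReal.ofReal (g u) =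
      ∫⁻ t in Set.Ioi (0:ℝ), (volume.restrict (Set.Ioo α 1)) {u | t < g u} :=
    lintegral_eq_lintegral_meas_lt _ hg_nn hg_ae
  have hlayer_h : ∫⁻ ω, ENNReal.ofReal (h ω) ∂μ =
      ∫⁻ t in Set.Ioi (0:ℝ), μ {a | t < h a} :=
    lintegral_eq_lintegral_meas_lt _ hh_nn hh_meas
  have hAB : ∫⁻ u in Set.Ioo α 1, ENNReal.ofReal (g u) = ∫⁻ ω, ENNReal.ofReal (h ω) ∂μ := by
    rw [hlayer_g, hlayer_h]
    exact setLIntegral_congr_fun measurableSet_Ioi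
      (fun t ht => hsame t ht)
  have hB_fin : ∫⁻ ω, ENNReal.ofReal (h ω) ∂μ < ⊤ := hh_int.lintegral_lt_top
  -- integrability of g
  have hg_int : IntegrableOn g (Set.Ioo α 1) := by
    refine ⟨hg_ae.aestronglyMeasurable, ?_⟩
    rw [hasFiniteIntegral_iff_ofReal hg_nn]
    rw [hAB]; exact hB_fin
  have hq_int : IntegrableOn (fun u => lowerQuantile μ Y u) (Set.Ioo α 1) := by
    have : (fun u => lowerQuantile μ Y u) = fun u => g u + v := by
      funext u; simp [hg]
    rw [this]
    exact hg_int.add (integrableOn_const (by rw [Real.volume_Ioo]; exact ENNReal.ofReal_ne_top))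
  refine ⟨?_, hq_int⟩
  -- Bochner conversions
  have hBg : ∫ u in Set.Ioo α 1, g u =
      (∫⁻ u in Set.Ioo α 1, ENNReal.ofReal (g u)).toReal :=
    integral_eq_lintegral_of_nonneg_ae hg_nn hg_ae.aestronglyMeasurable
  have hBh : ∫ ω, h ω ∂μ = (∫⁻ ω, ENNReal.ofReal (h ω) ∂μ).toReal :=
    integral_eq_lintegral_of_nonneg_ae hh_nn hh_meas.aestronglyMeasurable
  have hgh : ∫ u in Set.Ioo α 1, g u = ∫ ω, h ω ∂μ := by rw [hBg, hBh, hAB]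
  -- assemble LHS
  have hvol : (volume (Set.Ioo α 1)).toReal = 1 - α := by
    rw [Real.volume_Ioo, ENNReal.toReal_ofReal (by linarith)]
  have hLHS : ∫ u in α..1, lowerQuantile μ Y u
      = (∫ ω, h ω ∂μ) + v * (1 - α) := by
    rw [intervalIntegral.integral_of_le hα1.le, integral_Ioc_eq_integral_Ioo]
    have : ∫ u in Set.Ioo α 1, lowerQuantile μ Y u
        = ∫ u in Set.Ioo α 1, (g u + v) := by
      apply setIntegral_congr_fun measurableSet_Ioo
      intro u hu; simp [hg]
    rw [this, integral_add hg_int (integrableOn_const (by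
      rw [Real.volume_Ioo]; exact ENNReal.ofReal_ne_top))]
    rw [setIntegral_const, measureReal_def, hvol, hgh, smul_eq_mul]
    ring
  -- assemble RHS
  have hμT : (μ {ω | v ≤ Y ω}).toReal = 1 - α := hprob
  have hind : ∀ ω, Set.indicator {ω | v ≤ Y ω} (fun ω => Y ω - v) ω = h ω := by
    intro ω
    rw [Set.indicator_apply]
    by_cases hω : v ≤ Y ω
    · rw [if_pos (show ω ∈ {ω | v ≤ Y ω} from hω)]
      simp only [hh]
      rw [max_eq_left (by linarith : (0:ℝ) ≤ Y ω - v)]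
    · rw [if_neg (show ω ∉ {ω | v ≤ Y ω} from hω)]
      push_neg at hω
      simp only [hh]
      rw [max_eq_right (by linarith : Y ω - v ≤ 0)]
  have hRHS : ∫ ω in {ω | v ≤ Y ω}, Y ω ∂μ = (∫ ω, h ω ∂μ) + v * (1 - α) := by
    have h1 : ∫ ω in {ω | v ≤ Y ω}, Y ω ∂μ
        = ∫ ω in {ω | v ≤ Y ω}, ((Y ω - v) + v) ∂μ := by
      apply setIntegral_congr_fun hT; intro ω _; ring
    have hint1 : Integrable (fun ω => Y ω - v) μ := hYint.sub (integrable_const v)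
    rw [h1, integral_add hint1.restrict (integrable_const v).restrict]
    rw [setIntegral_const, measureReal_def, hμT, smul_eq_mul, mul_comm]
    congr 1
    rw [← integral_indicator hT]
    exact integral_congr_ae (Filter.Eventually.of_forall hind)
  rw [hLHS, hRHS]

/-- Expected Shortfall equals the conditional expectation of `−X` in the tail, and the
Euler ES-contributions `cᵢ = −(1−α)⁻¹ E[Xᵢ 𝟙{X ≤ −VaR_α(X)}]` add up to `ES_α(X)`. -/
theorem expectedShortfall_euler_decomposition {Ω : Type*} [MeasurableSpace Ω]
    (μ : Measure Ω) [IsProbabilityMeasure μ] {n : ℕ} (X : Fin n → Ω → ℝ)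
    (hX : ∀ i, Integrable (X i) μ) (α : ℝ) (hα : α ∈ Set.Ioo (0 : ℝ) 1)
    (hmeas : Measurable fun ω => ∑ i, X i ω)
    (hcont : μ {ω | (∑ i, X i ω) = -valueAtRisk μ (fun ω' => ∑ i, X i ω') α} = 0)
    (hprob : (μ {ω | (∑ i, X i ω) ≤ -valueAtRisk μ (fun ω' => ∑ i, X i ω') α}).toReal
      = 1 - α) :
    expectedShortfall μ (fun ω => ∑ i, X i ω) α
        = -((∫ ω in {ω | (∑ i, X i ω) ≤ -valueAtRisk μ (fun ω' => ∑ i, X i ω') α},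
              (∑ i, X i ω) ∂μ) / (1 - α)) ∧
      ∑ i, (-(1 - α)⁻¹ *
          ∫ ω in {ω | (∑ j, X j ω) ≤ -valueAtRisk μ (fun ω' => ∑ j, X j ω') α}, X i ω ∂μ)
        = expectedShortfall μ (fun ω => ∑ i, X i ω) α := by
  have hSint : Integrable (fun ω => ∑ i, X i ω) μ :=
    integrable_finset_sum _ fun i _ => hX i
  set Y : Ω → ℝ := fun ω => -(∑ i, X i ω) with hYdef
  have hY : Measurable Y := hmeas.neg
  have hYint : Integrable Y μ := hSint.neg
  set v : ℝ := valueAtRisk μ (fun ω' => ∑ i, X i ω') α with hvdef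
  have hvq : v = lowerQuantile μ Y α := rfl
  have hTeq : {ω | (∑ i, X i ω) ≤ -v} = {ω | v ≤ Y ω} := by
    ext ω; simp only [Set.mem_setOf_eq, hYdef, le_neg]
  have hconteq : {ω | (∑ i, X i ω) = -v} = {ω | Y ω = v} := by
    ext ω; simp only [Set.mem_setOf_eq, hYdef, neg_eq_iff_eq_neg]
  have hkey := quantile_tail_repr μ Y hY hYint α hα hvq
    (by rw [← hconteq]; exact hcont) (by rw [← hTeq]; exact hprob)
  have hvar : (fun u => valueAtRisk μ (fun ω' => ∑ i, X i ω') u)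
      = fun u => lowerQuantile μ Y u := rfl
  have hT : MeasurableSet {ω | (∑ i, X i ω) ≤ -v} :=
    measurableSet_le hmeas measurable_const
  have hIY : ∫ ω in {ω | (∑ i, X i ω) ≤ -v}, Y ω ∂μ
      = -∫ ω in {ω | (∑ i, X i ω) ≤ -v}, (∑ i, X i ω) ∂μ := by
    rw [← integral_neg]
  have hES : expectedShortfall μ (fun ω => ∑ i, X i ω) α
      = -((∫ ω in {ω | (∑ i, X i ω) ≤ -v}, (∑ i, X i ω) ∂μ) / (1 - α)) := by
    rw [expectedShortfall]
    have h1 : ∫ u in α..1, valueAtRisk μ (fun ω => ∑ i, X i ω) u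
        = ∫ u in α..1, lowerQuantile μ Y u := rfl
    rw [h1, hkey.1, ← hTeq, hIY]
    field_simp
  refine ⟨hES, ?_⟩
  have hsum : ∑ i, (-(1 - α)⁻¹ *
      ∫ ω in {ω | (∑ j, X j ω) ≤ -v}, X i ω ∂μ)
      = -(1 - α)⁻¹ * ∫ ω in {ω | (∑ j, X j ω) ≤ -v}, (∑ i, X i ω) ∂μ := by
    rw [← Finset.mul_sum, integral_finset_sum _ fun i _ => (hX i).restrict]
  rw [hsum, hES]
  rw [div_eq_mul_inv]
  ring
end
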